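/- Let f : {-1,1}^n → ℝ, let J ⊆ [n], let k ≥ 0 be an integer, and let μ ≥ 0 be such that Σ_{T ⊆ [n] : 2^k ≤ |T ∩ J^c| < 2^{k+1}} f̂(T)² ≥ μ. Let ρ = (S, y) be the random restriction in which every j ∈ J is fixed to an independent uniformly random bit, and each i ∈ J^c is kept alive independently with probability p = 2^{−k} (and otherwise fixed to an independent uniformly random bit). Then E_ρ[ Σ_{i ∈ S} f̂_ρ({i})² ] ≥ μ/20. -/

import Mathlib

open Finset

noncomputable section

/-- The ±1 value of a Boolean bit: `true ↦ 1`, `false ↦ -1`. -/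
def sgnB (b : Bool) : ℝ := if b then 1 else -1

/-- The character `χ_S(x) = ∏_{i ∈ S} x_i` on the Boolean cube. -/
def chiB {n : ℕ} (S : Finset (Fin n)) (x : Fin n → Bool) : ℝ := ∏ i ∈ S, sgnB (x i)

/-- Expectation over a uniformly random point of the cube `{-1,1}^n`. -/
def bexpect {n : ℕ} (f : (Fin n → Bool) → ℝ) : ℝ := (∑ x : Fin n → Bool, f x) / 2 ^ n

/-- The Fourier coefficient `f̂(S) = E_x [f(x) χ_S(x)]`. -/
def fCoeff {n : ℕ} (f : (Fin n → Bool) → ℝ) (S : Finset (Fin n)) : ℝ :=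
  bexpect (fun x => f x * chiB S x)

/-- `f` has degree at most `d`: all Fourier coefficients above level `d` vanish. -/
def degLE {n : ℕ} (f : (Fin n → Bool) → ℝ) (d : ℕ) : Prop :=
  ∀ S : Finset (Fin n), d < S.card → fCoeff f S = 0

/-- `Var[f] = Σ_{S ≠ ∅} f̂(S)²`. -/
def totalVar {n : ℕ} (f : (Fin n → Bool) → ℝ) : ℝ :=
  ∑ S ∈ univ.filter (fun S : Finset (Fin n) => S ≠ ∅), (fCoeff f S) ^ 2

/-- `Inf_j[f] = Σ_{S ∋ j} f̂(S)²`. -/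
def influence {n : ℕ} (f : (Fin n → Bool) → ℝ) (j : Fin n) : ℝ :=
  ∑ S ∈ univ.filter (fun S : Finset (Fin n) => j ∈ S), (fCoeff f S) ^ 2

/-- The restriction `f_ρ` for `ρ = (S, y)`: alive coordinates from `z`, dead ones from `y`.
(The restricted function is encoded as a function on the full cube which only depends on
the coordinates in `S`.) -/
def restrictFn {n : ℕ} (f : (Fin n → Bool) → ℝ) (S : Finset (Fin n)) (y : Fin n → Bool) :
    (Fin n → Bool) → ℝ :=
  fun z => f (fun i => if i ∈ S then z i else y i)

/-- Probability that the alive set of a random restriction with survival probability `p`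
equals `S`. -/
def aliveProb {n : ℕ} (p : ℝ) (S : Finset (Fin n)) : ℝ :=
  p ^ S.card * (1 - p) ^ (n - S.card)

/-- Expectation over a random restriction `ρ = (S, y)` with survival probability `p`:
each coordinate is alive independently with probability `p`, and dead coordinates get
independent uniform bits.  (`y` is sampled as a full uniform point of the cube; its values
on alive coordinates are irrelevant whenever the integrand ignores them.) -/
def rexpect {n : ℕ} (p : ℝ) (G : Finset (Fin n) → (Fin n → Bool) → ℝ) : ℝ :=
  ∑ S : Finset (Fin n), aliveProb p S * bexpect (fun y => G S y)

open Classical in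
/-- Probability of an event under a random restriction with survival probability `p`. -/
def rprob {n : ℕ} (p : ℝ) (E : Finset (Fin n) → (Fin n → Bool) → Prop) : ℝ :=
  rexpect p (fun S y => if E S y then 1 else 0)

/-- Expectation over the random restriction which kills every coordinate of `J`
(assigning it a uniform bit) and keeps each coordinate outside `J` alive independently
with probability `p`, assigning dead coordinates independent uniform bits. -/
def rexpectOutside {n : ℕ} (J : Finset (Fin n)) (p : ℝ)
    (G : Finset (Fin n) → (Fin n → Bool) → ℝ) : ℝ :=
  ∑ S ∈ Jᶜ.powerset, p ^ S.card * (1 - p) ^ (Jᶜ.card - S.card) * bexpect (fun y => G S y)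

lemma sgnB_mul_self (b : Bool) : sgnB b * sgnB b = 1 := by cases b <;> simp [sgnB]

lemma sgnB_not (b : Bool) : sgnB (!b) = - sgnB b := by cases b <;> simp [sgnB]

lemma sgnB_mul_ne {b b' : Bool} (h : b ≠ b') : sgnB b * sgnB b' = -1 := by
  cases b <;> cases b' <;> simp_all [sgnB]

lemma chiB_sq {n : ℕ} (S : Finset (Fin n)) (x : Fin n → Bool) : chiB S x * chiB S x = 1 := by
  rw [chiB, ← Finset.prod_mul_distrib]
  exact Finset.prod_eq_one (fun i _ => sgnB_mul_self _)

lemma chiB_mul {n : ℕ} (A B : Finset (Fin n)) (x : Fin n → Bool) :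
    chiB A x * chiB B x = chiB (symmDiff A B) x := by
  classical
  have hA : A = (A \ B) ∪ (A ∩ B) := by ext i; simp; tauto
  have hB : B = (B \ A) ∪ (A ∩ B) := by ext i; simp; tauto
  have h1 : chiB A x = chiB (A \ B) x * chiB (A ∩ B) x := by
    rw [chiB, chiB, chiB, ← Finset.prod_union (by simp [Finset.disjoint_left]; tauto)]
    rw [← hA]
  have h2 : chiB B x = chiB (B \ A) x * chiB (A ∩ B) x := by
    rw [chiB, chiB, chiB, ← Finset.prod_union (by simp [Finset.disjoint_left]; tauto)]
    rw [← hB]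
  have h3 : chiB (symmDiff A B) x = chiB (A \ B) x * chiB (B \ A) x := by
    rw [symmDiff, chiB, chiB, chiB, ← Finset.prod_union (by simp [Finset.disjoint_left]; tauto)]
    rfl
  rw [h1, h2, h3]
  have := chiB_sq (A ∩ B) x
  linear_combination (chiB (A \ B) x * chiB (B \ A) x) * this

lemma sum_chiB {n : ℕ} (C : Finset (Fin n)) :
    ∑ y : Fin n → Bool, chiB C y = if C = ∅ then (2:ℝ)^n else 0 := by
  classical
  rcases eq_or_ne C ∅ with hC | hC
  · simp [hC, chiB, Finset.card_univ]
  · simp only [hC, if_false]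
    obtain ⟨i, hi⟩ := Finset.nonempty_iff_ne_empty.2 hC
    have inv : Function.Involutive (fun y : Fin n → Bool => Function.update y i (!(y i))) := by
      intro y
      ext j
      rcases eq_or_ne j i with rfl | hj
      · simp
      · simp [Function.update_of_ne hj]
    have key : ∀ y : Fin n → Bool, chiB C (Function.update y i (!(y i))) = - chiB C y := by
      intro y
      rw [chiB, chiB, ← Finset.mul_prod_erase C _ hi, ← Finset.mul_prod_erase C (fun j => sgnB (y j)) hi]
      have : ∏ j ∈ C.erase i, sgnB (Function.update y i (!(y i)) j)
          = ∏ j ∈ C.erase i, sgnB (y j) := by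
        apply Finset.prod_congr rfl
        intro j hj
        rw [Function.update_of_ne (Finset.ne_of_mem_erase hj)]
      rw [this, Function.update_self, sgnB_not]
      ring
    have := Equiv.sum_comp inv.toPerm (chiB C)
    simp only [Function.Involutive.coe_toPerm] at this
    have h2 : ∑ y : Fin n → Bool, chiB C y = - ∑ y : Fin n → Bool, chiB C y := by
      conv_lhs => rw [← this]
      rw [← Finset.sum_neg_distrib]
      exact Finset.sum_congr rfl (fun y _ => key y)
    linarith

lemma bexpect_chiB_mul {n : ℕ} (A B : Finset (Fin n)) :
    bexpect (fun y => chiB A y * chiB B y) = if A = B then 1 else 0 := by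
  simp only [bexpect]
  have : ∀ y : Fin n → Bool, chiB A y * chiB B y = chiB (symmDiff A B) y := fun y => chiB_mul A B y
  rw [Finset.sum_congr rfl (fun y _ => this y), sum_chiB]
  rcases eq_or_ne A B with rfl | hAB
  · simp [symmDiff_self]
  · have : symmDiff A B ≠ ∅ := by
      simp only [ne_eq, ← Finset.bot_eq_empty, symmDiff_eq_bot]
      exact hAB
    simp [this, hAB]

lemma sum_chiB_pair {n : ℕ} (x x' : Fin n → Bool) :
    ∑ T : Finset (Fin n), chiB T x * chiB T x' = if x = x' then (2:ℝ)^n else 0 := by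
  classical
  have h1 : ∀ T : Finset (Fin n), chiB T x * chiB T x'
      = (∏ i ∈ T, sgnB (x i) * sgnB (x' i)) * ∏ i ∈ univ \ T, (1:ℝ) := by
    intro T; simp [chiB, Finset.prod_mul_distrib]
  rw [Finset.sum_congr rfl (fun T _ => h1 T)]
  rw [← Finset.powerset_univ, ← Finset.prod_add]
  rcases eq_or_ne x x' with rfl | hxx
  · simp only [if_pos rfl]
    have h2 : ∀ i : Fin n, sgnB (x i) * sgnB (x i) + 1 = 2 := by
      intro i; rw [sgnB_mul_self]; norm_num
    rw [Finset.prod_congr rfl (fun i _ => h2 i)]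
    simp
  · simp only [if_neg hxx]
    obtain ⟨i, hi⟩ : ∃ i, x i ≠ x' i := Function.ne_iff.mp hxx
    apply Finset.prod_eq_zero (Finset.mem_univ i)
    rw [sgnB_mul_ne hi]; ring

lemma fourier_inversion {n : ℕ} (f : (Fin n → Bool) → ℝ) (x : Fin n → Bool) :
    ∑ T : Finset (Fin n), fCoeff f T * chiB T x = f x := by
  classical
  simp only [fCoeff, bexpect]
  have h1 : ∀ T : Finset (Fin n),
      (∑ x' : Fin n → Bool, f x' * chiB T x') / 2 ^ n * chiB T x
      = (∑ x' : Fin n → Bool, f x' * (chiB T x' * chiB T x)) / 2 ^ n := by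
    intro T
    rw [div_mul_eq_mul_div, Finset.sum_mul]
    congr 1; apply Finset.sum_congr rfl; intros; ring
  rw [Finset.sum_congr rfl (fun T _ => h1 T), ← Finset.sum_div, Finset.sum_comm]
  have h2 : ∀ x' : Fin n → Bool,
      ∑ T : Finset (Fin n), f x' * (chiB T x' * chiB T x)
      = f x' * (if x' = x then (2:ℝ)^n else 0) := by
    intro x'
    rw [← Finset.mul_sum, sum_chiB_pair]
  rw [Finset.sum_congr rfl (fun x' _ => h2 x')]
  have h3 : (∑ x' : Fin n → Bool, f x' * if x' = x then (2:ℝ)^n else 0)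
      = f x * (2:ℝ)^n := by
    rw [Finset.sum_congr rfl (fun x' _ => mul_ite ((x':Fin n → Bool) = x) (f x') ((2:ℝ)^n) 0)]
    simp
  rw [h3, mul_div_assoc]
  simp [ne_of_gt (pow_pos (by norm_num : (0:ℝ) < 2) n)]

lemma chiB_merge {n : ℕ} (T S : Finset (Fin n)) (z y : Fin n → Bool) :
    chiB T (fun i => if i ∈ S then z i else y i) = chiB (T ∩ S) z * chiB (T \ S) y := by
  classical
  have hT : T = (T ∩ S) ∪ (T \ S) := by ext i; simp; tauto
  rw [chiB]
  conv_lhs => rw [hT]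
  rw [Finset.prod_union (by simp [Finset.disjoint_left]; tauto)]
  congr 1
  · apply Finset.prod_congr rfl
    intro i hi
    simp only [Finset.mem_inter] at hi
    rw [if_pos hi.2]
  · apply Finset.prod_congr rfl
    intro i hi
    simp only [Finset.mem_sdiff] at hi
    rw [if_neg hi.2]

lemma coeff_restrict {n : ℕ} (f : (Fin n → Bool) → ℝ) (S : Finset (Fin n)) (y : Fin n → Bool)
    (U : Finset (Fin n)) :
    fCoeff (restrictFn f S y) U
      = ∑ T ∈ univ.filter (fun T : Finset (Fin n) => T ∩ S = U), fCoeff f T * chiB (T \ S) y := by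
  classical
  rw [fCoeff, bexpect]
  have h1 : ∀ z : Fin n → Bool, restrictFn f S y z * chiB U z
      = ∑ T : Finset (Fin n), fCoeff f T * chiB (T \ S) y * (chiB (T ∩ S) z * chiB U z) := by
    intro z
    rw [restrictFn]
    conv_lhs => rw [← fourier_inversion f (fun i => if i ∈ S then z i else y i)]
    rw [Finset.sum_mul]
    apply Finset.sum_congr rfl
    intro T _
    rw [chiB_merge]
    ring
  rw [Finset.sum_congr rfl (fun z _ => h1 z), Finset.sum_comm, Finset.sum_div]
  rw [Finset.sum_filter]
  apply Finset.sum_congr rfl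
  intro T _
  rw [← Finset.mul_sum, mul_div_assoc]
  have : (∑ z : Fin n → Bool, chiB (T ∩ S) z * chiB U z) / 2 ^ n
      = if T ∩ S = U then (1:ℝ) else 0 := bexpect_chiB_mul (T ∩ S) U
  rw [this]
  split <;> simp

lemma bexpect_sum {n : ℕ} {ι : Type*} (s : Finset ι) (F : ι → (Fin n → Bool) → ℝ) :
    bexpect (fun y => ∑ t ∈ s, F t y) = ∑ t ∈ s, bexpect (F t) := by
  simp only [bexpect, ← Finset.sum_div]
  rw [Finset.sum_comm]

lemma bexpect_const_mul {n : ℕ} (c : ℝ) (F : (Fin n → Bool) → ℝ) :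
    bexpect (fun y => c * F y) = c * bexpect F := by
  simp only [bexpect, ← Finset.mul_sum, mul_div_assoc]

lemma restr_determines {n : ℕ} {S T T' : Finset (Fin n)}
    (h1 : T ∩ S = T' ∩ S) (h2 : T \ S = T' \ S) : T = T' := by
  ext i
  by_cases hi : i ∈ S
  · have := Finset.ext_iff.mp h1 i
    simp only [Finset.mem_inter] at this
    tauto
  · have := Finset.ext_iff.mp h2 i
    simp only [Finset.mem_sdiff] at this
    tauto

lemma bexpect_coeff_sq {n : ℕ} (f : (Fin n → Bool) → ℝ) (S U : Finset (Fin n)) :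
    bexpect (fun y => fCoeff (restrictFn f S y) U ^ 2)
      = ∑ T ∈ univ.filter (fun T : Finset (Fin n) => T ∩ S = U), fCoeff f T ^ 2 := by
  classical
  set s := univ.filter (fun T : Finset (Fin n) => T ∩ S = U) with hs
  have h1 : ∀ y : Fin n → Bool, fCoeff (restrictFn f S y) U ^ 2
      = ∑ T ∈ s, ∑ T' ∈ s, (fCoeff f T * fCoeff f T') * (chiB (T \ S) y * chiB (T' \ S) y) := by
    intro y
    rw [coeff_restrict, sq, Finset.sum_mul_sum]
    apply Finset.sum_congr rfl; intro T _
    apply Finset.sum_congr rfl; intro T' _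
    ring
  calc bexpect (fun y => fCoeff (restrictFn f S y) U ^ 2)
      = bexpect (fun y => ∑ T ∈ s, ∑ T' ∈ s,
          (fCoeff f T * fCoeff f T') * (chiB (T \ S) y * chiB (T' \ S) y)) := by
        simp only [h1]
    _ = ∑ T ∈ s, ∑ T' ∈ s, (fCoeff f T * fCoeff f T')
          * bexpect (fun y => chiB (T \ S) y * chiB (T' \ S) y) := by
        rw [bexpect_sum]
        apply Finset.sum_congr rfl; intro T _
        rw [bexpect_sum]
        apply Finset.sum_congr rfl; intro T' _
        exact bexpect_const_mul _ _
    _ = ∑ T ∈ s, fCoeff f T ^ 2 := by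
        apply Finset.sum_congr rfl; intro T hT
        rw [Finset.sum_eq_single T]
        · rw [bexpect_chiB_mul, if_pos rfl, sq]; ring
        · intro T' hT' hne
          rw [bexpect_chiB_mul, if_neg, mul_zero]
          intro heq
          simp only [hs, Finset.mem_filter] at hT hT'
          exact hne (restr_determines (hT'.2.trans hT.2.symm) heq.symm)
        · intro habs; exact absurd hT habs


lemma bexpect_level_one {n : ℕ} (f : (Fin n → Bool) → ℝ) (S : Finset (Fin n)) :
    bexpect (fun y => ∑ i ∈ S, fCoeff (restrictFn f S y) {i} ^ 2)
      = ∑ T ∈ univ.filter (fun T : Finset (Fin n) => (T ∩ S).card = 1), fCoeff f T ^ 2 := by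
  classical
  rw [bexpect_sum]
  have h1 : ∀ i ∈ S, bexpect (fun y => fCoeff (restrictFn f S y) {i} ^ 2)
      = ∑ T : Finset (Fin n), (if T ∩ S = {i} then fCoeff f T ^ 2 else 0) := by
    intro i _
    rw [bexpect_coeff_sq, Finset.sum_filter]
  rw [Finset.sum_congr rfl h1, Finset.sum_comm, Finset.sum_filter]
  apply Finset.sum_congr rfl
  intro T _
  rcases eq_or_ne (T ∩ S).card 1 with hc | hc
  · obtain ⟨a, ha⟩ := Finset.card_eq_one.mp hc
    have haS : a ∈ S := by
      have : a ∈ T ∩ S := ha ▸ Finset.mem_singleton_self a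
      exact (Finset.mem_inter.mp this).2
    have h2 : ∀ i : Fin n, (T ∩ S = {i}) ↔ (i = a) := by
      intro i
      rw [ha, Finset.singleton_inj, eq_comm]
    rw [if_pos hc]
    rw [Finset.sum_congr rfl (fun i _ => by rw [if_congr (h2 i) rfl rfl])]
    rw [Finset.sum_ite_eq' S a (fun _ => fCoeff f T ^ 2), if_pos haS]
  · rw [if_neg hc]
    apply Finset.sum_eq_zero
    intro i _
    rw [if_neg]
    intro heq
    exact hc (by rw [heq]; simp)

-- decomposition of a sum over the powerset of a disjoint union
lemma sum_powerset_union {n : ℕ} {A B : Finset (Fin n)} (hAB : Disjoint A B)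
    (F : Finset (Fin n) → ℝ) :
    ∑ S ∈ (A ∪ B).powerset, F S
      = ∑ S₁ ∈ A.powerset, ∑ S₂ ∈ B.powerset, F (S₁ ∪ S₂) := by
  classical
  rw [← Finset.sum_product']
  apply Finset.sum_bij' (fun S _ => (S ∩ A, S ∩ B))
    (fun P _ => P.1 ∪ P.2)
  · intro S hS
    simp only [Finset.mem_powerset] at hS
    simp only [Finset.mem_product, Finset.mem_powerset]
    exact ⟨Finset.inter_subset_right, Finset.inter_subset_right⟩
  · intro P hP
    simp only [Finset.mem_product, Finset.mem_powerset] at hP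
    simp only [Finset.mem_powerset]
    exact Finset.union_subset_union hP.1 hP.2
  · intro S hS
    simp only [Finset.mem_powerset] at hS
    rw [← Finset.inter_union_distrib_left]
    exact Finset.inter_eq_left.mpr hS
  · intro P hP
    simp only [Finset.mem_product, Finset.mem_powerset] at hP
    have hd : Disjoint P.1 P.2 := hAB.mono hP.1 hP.2
    have h1 : (P.1 ∪ P.2) ∩ A = P.1 := by
      rw [Finset.union_inter_distrib_right, Finset.inter_eq_left.mpr hP.1]
      have : P.2 ∩ A = ∅ := by
        rw [Finset.inter_comm]
        exact Finset.disjoint_iff_inter_eq_empty.mp ((hAB.symm.mono_left hP.2).symm)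
      rw [this, Finset.union_empty]
    have h2 : (P.1 ∪ P.2) ∩ B = P.2 := by
      rw [Finset.union_inter_distrib_right, Finset.inter_eq_left.mpr hP.2]
      have : P.1 ∩ B = ∅ := by
        exact Finset.disjoint_iff_inter_eq_empty.mp (hAB.mono_left hP.1)
      rw [this, Finset.empty_union]
    ext <;> simp [h1, h2]
  · intro S hS
    simp only [Finset.mem_powerset] at hS
    rw [← Finset.inter_union_distrib_left, Finset.inter_eq_left.mpr hS]


lemma weight_sum_one {n : ℕ} (B : Finset (Fin n)) (p : ℝ) :
    ∑ S ∈ B.powerset, p ^ S.card * (1 - p) ^ (B.card - S.card) = 1 := by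
  classical
  have h := Finset.prod_add (fun _ : Fin n => p) (fun _ : Fin n => 1 - p) B
  simp only [Finset.prod_const] at h
  have h2 : ∀ S ∈ B.powerset, p ^ S.card * (1-p) ^ (B \ S).card
      = p ^ S.card * (1 - p) ^ (B.card - S.card) := by
    intro S hS
    rw [Finset.card_sdiff_of_subset (Finset.mem_powerset.mp hS)]
  rw [Finset.sum_congr rfl h2] at h
  rw [← h]
  simp

lemma weight_sum_singletons {n : ℕ} (A : Finset (Fin n)) (p : ℝ) :
    ∑ S ∈ A.powerset.filter (fun S => S.card = 1),
        p ^ S.card * (1 - p) ^ (A.card - S.card)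
      = A.card * p * (1 - p) ^ (A.card - 1) := by
  classical
  have h1 : A.powerset.filter (fun S => S.card = 1) = Finset.powersetCard 1 A := by
    rw [Finset.powersetCard_eq_filter]
  rw [h1]
  have h2 : ∀ S ∈ Finset.powersetCard 1 A,
      p ^ S.card * (1 - p) ^ (A.card - S.card) = p * (1 - p) ^ (A.card - 1) := by
    intro S hS
    rw [(Finset.mem_powersetCard.mp hS).2]
    ring
  rw [Finset.sum_congr rfl h2, Finset.sum_const, Finset.card_powersetCard]
  simp [Nat.choose_one_right]
  ring

-- the inner sum over alive sets S for a fixed T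
lemma inner_weight_sum {n : ℕ} (J T : Finset (Fin n)) (p : ℝ) :
    ∑ S ∈ Jᶜ.powerset.filter (fun S => (T ∩ S).card = 1),
        p ^ S.card * (1 - p) ^ (Jᶜ.card - S.card)
      = (T \ J).card * p * (1 - p) ^ ((T \ J).card - 1) := by
  classical
  set A := Jᶜ ∩ T with hA
  set B := Jᶜ \ T with hB
  have hdisj : Disjoint A B := by
    simp [hA, hB, Finset.disjoint_left]
    tauto
  have hun : Jᶜ = A ∪ B := by ext i; simp [hA, hB]; tauto
  have hTJ : T \ J = A := by ext i; simp [hA, Finset.mem_compl]; tauto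
  have key : ∀ S₁ ∈ A.powerset, ∀ S₂ ∈ B.powerset,
      (if (T ∩ (S₁ ∪ S₂)).card = 1
        then p ^ (S₁ ∪ S₂).card * (1-p) ^ (Jᶜ.card - (S₁ ∪ S₂).card) else 0)
      = (if S₁.card = 1 then p ^ S₁.card * (1-p) ^ (A.card - S₁.card) else 0)
        * (p ^ S₂.card * (1-p) ^ (B.card - S₂.card)) := by
    intro S₁ hS₁ S₂ hS₂
    rw [Finset.mem_powerset] at hS₁ hS₂
    have hi1 : ∀ i, i ∈ S₁ → i ∈ T := fun i h => (Finset.mem_inter.mp (hS₁ h)).2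
    have hi2 : ∀ i, i ∈ S₂ → i ∉ T := fun i h => (Finset.mem_sdiff.mp (hS₂ h)).2
    have hTS : T ∩ (S₁ ∪ S₂) = S₁ := by
      ext i
      simp only [Finset.mem_inter, Finset.mem_union]
      constructor
      · rintro ⟨hT, h1 | h2⟩
        · exact h1
        · exact absurd hT (hi2 i h2)
      · intro h; exact ⟨hi1 i h, Or.inl h⟩
    have hd12 : Disjoint S₁ S₂ := hdisj.mono hS₁ hS₂
    have hcard : (S₁ ∪ S₂).card = S₁.card + S₂.card := Finset.card_union_of_disjoint hd12
    have hJc : Jᶜ.card = A.card + B.card := by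
      rw [hun, Finset.card_union_of_disjoint hdisj]
    have hle1 : S₁.card ≤ A.card := Finset.card_le_card hS₁
    have hle2 : S₂.card ≤ B.card := Finset.card_le_card hS₂
    have hexp : Jᶜ.card - (S₁.card + S₂.card) = (A.card - S₁.card) + (B.card - S₂.card) := by
      omega
    rw [hTS, hcard, hexp, pow_add, pow_add]
    split
    · ring
    · simp
  calc ∑ S ∈ Jᶜ.powerset.filter (fun S => (T ∩ S).card = 1),
        p ^ S.card * (1 - p) ^ (Jᶜ.card - S.card)
      = ∑ S ∈ Jᶜ.powerset,
          (if (T ∩ S).card = 1 then p ^ S.card * (1 - p) ^ (Jᶜ.card - S.card) else 0) :=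
        Finset.sum_filter _ _
    _ = ∑ S₁ ∈ A.powerset, ∑ S₂ ∈ B.powerset,
          (if (T ∩ (S₁ ∪ S₂)).card = 1
            then p ^ (S₁ ∪ S₂).card * (1-p) ^ (Jᶜ.card - (S₁ ∪ S₂).card) else 0) := by
        have hstep := sum_powerset_union hdisj
          (fun S => if (T ∩ S).card = 1 then p ^ S.card * (1 - p) ^ (Jᶜ.card - S.card) else 0)
        rw [← hun] at hstep
        exact hstep
    _ = (∑ S₁ ∈ A.powerset,
          (if S₁.card = 1 then p ^ S₁.card * (1-p) ^ (A.card - S₁.card) else 0))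
        * (∑ S₂ ∈ B.powerset, p ^ S₂.card * (1-p) ^ (B.card - S₂.card)) := by
        rw [Finset.sum_mul_sum]
        apply Finset.sum_congr rfl; intro S₁ hS₁
        apply Finset.sum_congr rfl; intro S₂ hS₂
        exact key S₁ hS₁ S₂ hS₂
    _ = (T \ J).card * p * (1 - p) ^ ((T \ J).card - 1) := by
        rw [weight_sum_one, mul_one, ← Finset.sum_filter, weight_sum_singletons, hTJ]

lemma exp_neg_two_ge : (1:ℝ)/20 ≤ Real.exp (-2) := by
  have h1 : Real.exp 1 < 2.7182818286 := Real.exp_one_lt_d9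
  have h2 : Real.exp (-2) * Real.exp 2 = 1 := by rw [← Real.exp_add]; norm_num
  have h3 : Real.exp 2 = Real.exp 1 * Real.exp 1 := by rw [← Real.exp_add]; norm_num
  have h4 : (0:ℝ) < Real.exp 1 := Real.exp_pos 1
  nlinarith [Real.exp_pos (-2)]

lemma q_pow_ge {N : ℕ} (hN : 2 ≤ N) : Real.exp (-1) ≤ (1 - (N:ℝ)⁻¹) ^ (N - 1) := by
  have hN1 : (1:ℝ) ≤ (N:ℝ) - 1 := by
    have : (2:ℝ) ≤ (N:ℝ) := by exact_mod_cast hN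
    linarith
  have hpos : (0:ℝ) < (N:ℝ) - 1 := by linarith
  have hNpos : (0:ℝ) < (N:ℝ) := by linarith
  set x := ((N:ℝ) - 1)⁻¹ with hx
  have hxpos : 0 < x := inv_pos.mpr hpos
  have hq : Real.exp (-x) ≤ 1 - (N:ℝ)⁻¹ := by
    have hepos := Real.exp_pos x
    have e1 : 1 + x ≤ Real.exp x := by linarith [Real.add_one_le_exp x]
    have key : (1:ℝ) ≤ (1 - (N:ℝ)⁻¹) * Real.exp x := by
      have hprod : (1 - (N:ℝ)⁻¹) * (1 + x) = 1 := by
        rw [hx]; field_simp; ring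
      have hqnn : (0:ℝ) ≤ 1 - (N:ℝ)⁻¹ := by
        have : (N:ℝ)⁻¹ ≤ 1 := by
          rw [inv_le_one_iff₀]; right; linarith
        linarith
      nlinarith
    have hinv : (Real.exp x)⁻¹ * Real.exp x = 1 := inv_mul_cancel₀ (ne_of_gt hepos)
    rw [Real.exp_neg]
    nlinarith
  have hq0 : (0:ℝ) ≤ Real.exp (-x) := le_of_lt (Real.exp_pos _)
  have hpow := pow_le_pow_left₀ hq0 hq (N - 1)
  calc Real.exp (-1) = Real.exp (-x) ^ (N - 1) := by
        rw [← Real.exp_nat_mul]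
        congr 1
        have hc : ((N - 1 : ℕ) : ℝ) = (N:ℝ) - 1 := by
          have h1 : 1 ≤ N := by omega
          push_cast [h1]
          ring
        rw [hc, hx]
        field_simp
    _ ≤ _ := hpow

lemma key_ineq (k m : ℕ) (h1 : 2^k ≤ m) (h2 : m < 2^(k+1)) :
    (1:ℝ)/20 ≤ (m:ℝ) * (2:ℝ)⁻¹^k * (1 - (2:ℝ)⁻¹^k)^(m-1) := by
  set N := 2^k with hNdef
  have hp : ((2:ℝ)⁻¹)^k = ((N:ℕ):ℝ)⁻¹ := by
    rw [hNdef]; push_cast; rw [inv_pow]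
  have hN1 : 1 ≤ N := Nat.one_le_two_pow
  have hNpos : (0:ℝ) < (N:ℝ) := by exact_mod_cast Nat.lt_of_lt_of_le Nat.zero_lt_one hN1
  have hm2 : m < 2 * N := by
    have : 2^(k+1) = 2 * N := by rw [hNdef]; ring
    omega
  have hq0 : (0:ℝ) ≤ 1 - (N:ℝ)⁻¹ := by
    have : (N:ℝ)⁻¹ ≤ 1 := by
      rw [inv_le_one_iff₀]; right
      exact_mod_cast hN1
    linarith
  have hq1 : 1 - (N:ℝ)⁻¹ ≤ 1 := by
    have : (0:ℝ) ≤ (N:ℝ)⁻¹ := by positivity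
    linarith
  have hmp : (1:ℝ) ≤ (m:ℝ) * (N:ℝ)⁻¹ := by
    have hNm : (N:ℝ) ≤ (m:ℝ) := by exact_mod_cast h1
    have := mul_le_mul_of_nonneg_right hNm (le_of_lt (inv_pos.mpr hNpos))
    rw [mul_inv_cancel₀ (ne_of_gt hNpos)] at this
    exact this
  have hqpow : (1:ℝ)/20 ≤ (1 - (N:ℝ)⁻¹)^(m-1) := by
    rcases Nat.lt_or_ge N 2 with hN2 | hN2
    · have hNeq : N = 1 := by omega
      have hm1 : m = 1 := by omega
      rw [hm1]
      norm_num
    · have hle : m - 1 ≤ (N-1)*2 := by omega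
      have h3 : (1 - (N:ℝ)⁻¹)^((N-1)*2) ≤ (1 - (N:ℝ)⁻¹)^(m-1) :=
        pow_le_pow_of_le_one hq0 hq1 hle
      have h4 : Real.exp (-2) ≤ (1 - (N:ℝ)⁻¹)^((N-1)*2) := by
        rw [pow_mul]
        have h6 := q_pow_ge hN2
        have h5 : Real.exp (-2) = (Real.exp (-1))^2 := by
          rw [← Real.exp_nat_mul]; norm_num
        rw [h5]
        exact pow_le_pow_left₀ (le_of_lt (Real.exp_pos _)) h6 2
      linarith [exp_neg_two_ge]
  rw [hp]
  calc (1:ℝ)/20 ≤ (1 - (N:ℝ)⁻¹)^(m-1) := hqpow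
    _ = 1 * (1 - (N:ℝ)⁻¹)^(m-1) := (one_mul _).symm
    _ ≤ ((m:ℝ) * (N:ℝ)⁻¹) * (1 - (N:ℝ)⁻¹)^(m-1) :=
        mul_le_mul_of_nonneg_right hmp (pow_nonneg hq0 _)

/-- restrictions with suitable survival probability place large Fourier
mass on the linear level. -/
theorem level_one_mass (n : ℕ) (f : (Fin n → Bool) → ℝ) (J : Finset (Fin n)) (k : ℕ)
    (μ : ℝ) (hμ : 0 ≤ μ)
    (h : (∑ T ∈ univ.filter (fun T : Finset (Fin n) =>
        2 ^ k ≤ (T \ J).card ∧ (T \ J).card < 2 ^ (k + 1)), fCoeff f T ^ 2) ≥ μ) :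
    rexpectOutside J ((2:ℝ)⁻¹ ^ k)
        (fun S y => ∑ i ∈ S, fCoeff (restrictFn f S y) {i} ^ 2)
      ≥ μ / 20 := by
  classical
  set p : ℝ := (2:ℝ)⁻¹ ^ k with hpdef
  have hp0 : (0:ℝ) ≤ p := by positivity
  have hp1 : p ≤ 1 := by
    rw [hpdef]
    exact pow_le_one₀ (by norm_num) (by norm_num)
  have hq0 : (0:ℝ) ≤ 1 - p := by linarith
  set W : Finset (Fin n) → ℝ :=
    fun T => ((T \ J).card : ℝ) * p * (1 - p) ^ ((T \ J).card - 1) with hW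
  have hstep1 : rexpectOutside J p (fun S y => ∑ i ∈ S, fCoeff (restrictFn f S y) {i} ^ 2)
      = ∑ T : Finset (Fin n), fCoeff f T ^ 2 * W T := by
    rw [rexpectOutside]
    have h1 : ∀ S ∈ Jᶜ.powerset,
        p ^ S.card * (1 - p) ^ (Jᶜ.card - S.card)
          * bexpect (fun y => ∑ i ∈ S, fCoeff (restrictFn f S y) {i} ^ 2)
        = ∑ T : Finset (Fin n),
            (if (T ∩ S).card = 1
              then fCoeff f T ^ 2 * (p ^ S.card * (1 - p) ^ (Jᶜ.card - S.card)) else 0) := by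
      intro S _
      rw [bexpect_level_one, Finset.mul_sum, ← Finset.sum_filter]
      apply Finset.sum_congr rfl
      intro T _
      ring
    rw [Finset.sum_congr rfl h1, Finset.sum_comm]
    apply Finset.sum_congr rfl
    intro T _
    rw [← Finset.sum_filter, ← Finset.mul_sum, inner_weight_sum]
  rw [ge_iff_le, hstep1]
  set cond := univ.filter (fun T : Finset (Fin n) =>
      2 ^ k ≤ (T \ J).card ∧ (T \ J).card < 2 ^ (k + 1)) with hcond
  have hWnn : ∀ T : Finset (Fin n), 0 ≤ W T := by
    intro T
    rw [hW]
    have : (0:ℝ) ≤ ((T \ J).card : ℝ) := Nat.cast_nonneg _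
    positivity
  calc μ / 20 ≤ (∑ T ∈ cond, fCoeff f T ^ 2) / 20 := by linarith
    _ = ∑ T ∈ cond, fCoeff f T ^ 2 * (1/20) := by
        rw [Finset.sum_div]
        apply Finset.sum_congr rfl
        intros; ring
    _ ≤ ∑ T ∈ cond, fCoeff f T ^ 2 * W T := by
        apply Finset.sum_le_sum
        intro T hT
        rw [hcond, Finset.mem_filter] at hT
        apply mul_le_mul_of_nonneg_left _ (sq_nonneg _)
        have := key_ineq k ((T \ J).card) hT.2.1 hT.2.2
        rw [← hpdef] at this
        rw [hW]
        linarith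
    _ ≤ ∑ T : Finset (Fin n), fCoeff f T ^ 2 * W T := by
        apply Finset.sum_le_sum_of_subset_of_nonneg (Finset.filter_subset _ _)
        intro T _ _
        exact mul_nonneg (sq_nonneg _) (hWnn T)
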